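/- Let (Ω, ℱ, P) be a probability space with a filtration (ℱ_n)_{n∈ℕ}, fix h : ℕ and δ ∈ (0,1], and let (X_n)_{n∈ℕ} be a sequence of ℕ-valued random variables such that: (i) X_n is ℱ_n-measurable for every n; (ii) X_0 = 0 and X_n ≤ X_{n+1} ≤ h pointwise; and (iii) for every n, almost surely δ · 1_{{X_n < h}} ≤ E[1_{{X_{n+1} > X_n}} | ℱ_n]. Let T = inf { n : X_n = h } be the hitting time of h. Then E[T] ≤ h/δ. -/

import Mathlib

open MeasureTheory ProbabilityTheory
open scoped ENNReal

/-- Quantitative version: an adapted, nondecreasing ℕ-valued process starting at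
`0`, bounded by `h`, which strictly increases with conditional probability at
least `δ` whenever it is below `h`, hits `h` at a time `T` with `E[T] ≤ h / δ`
(where `T = ∞` if `h` is never reached). -/
theorem adapted_progress_hitting_time_expectation
    {Ω : Type*} [m : MeasurableSpace Ω]
    (P : Measure Ω) [IsProbabilityMeasure P]
    (ℱ : Filtration ℕ m)
    (h : ℕ) (δ : ℝ) (hδ0 : 0 < δ) (hδ1 : δ ≤ 1)
    (X : ℕ → Ω → ℕ)
    (hadapted : ∀ n, Measurable[ℱ n] (X n))
    (hX0 : ∀ ω, X 0 ω = 0)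
    (hmono : ∀ n ω, X n ω ≤ X (n + 1) ω)
    (hbd : ∀ n ω, X n ω ≤ h)
    (hprog : ∀ n, ∀ᵐ ω ∂P,
      δ * Set.indicator {ω' | X n ω' < h} (fun _ => (1 : ℝ)) ω ≤
        (P[Set.indicator {ω' | X n ω' < X (n + 1) ω'} (fun _ => (1 : ℝ)) | ℱ n]) ω)
    (T : Ω → ℝ≥0∞)
    (hT : ∀ ω, T ω = sInf {t : ℝ≥0∞ | ∃ n : ℕ, X n ω = h ∧ t = (n : ℝ≥0∞)}) :
    ∫⁻ ω, T ω ∂P ≤ ENNReal.ofReal ((h : ℝ) / δ) := by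
  have hXm : ∀ n, Measurable (X n) := fun n => (hadapted n).mono (ℱ.le n) le_rfl
  have hmono' : ∀ ω, Monotone fun n => X n ω :=
    fun ω => monotone_nat_of_le_succ (fun n => hmono n ω)
  set A : ℕ → Set Ω := fun n => {ω | X n ω < h} with hAdef
  set B : ℕ → Set Ω := fun n => {ω | X n ω < X (n + 1) ω} with hBdef
  have hAmeas : ∀ n, MeasurableSet (A n) :=
    fun n => measurableSet_lt (hXm n) measurable_const
  have hBmeas : ∀ n, MeasurableSet (B n) :=
    fun n => measurableSet_lt (hXm n) (hXm (n + 1))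
  -- pointwise: T = number of times below h
  have hTsum : ∀ ω, T ω = ∑' n, (A n).indicator (fun _ => (1 : ℝ≥0∞)) ω := by
    intro ω
    rw [hT ω]
    by_cases hex : ∃ n, X n ω = h
    · set N := Nat.find hex with hN
      have hspec : X N ω = h := Nat.find_spec hex
      have hlt : ∀ n, n < N → X n ω < h := by
        intro n hn
        exact lt_of_le_of_ne (hbd n ω) (Nat.find_min hex hn)
      have hge : ∀ n, N ≤ n → ¬ X n ω < h := by
        intro n hn
        have h1 : X N ω ≤ X n ω := hmono' ω hn
        omega
      have hind : ∀ n, (A n).indicator (fun _ => (1 : ℝ≥0∞)) ω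
          = if n < N then 1 else 0 := by
        intro n
        by_cases hc : n < N
        · rw [Set.indicator_of_mem (show ω ∈ A n from hlt n hc), if_pos hc]
        · rw [Set.indicator_of_notMem (show ω ∉ A n from hge n (not_lt.mp hc)), if_neg hc]
      have hR : ∑' n, (A n).indicator (fun _ => (1 : ℝ≥0∞)) ω = N := by
        have : ∑' n, (A n).indicator (fun _ => (1 : ℝ≥0∞)) ω
            = ∑ n ∈ Finset.range N, (A n).indicator (fun _ => (1 : ℝ≥0∞)) ω := by
          refine tsum_eq_sum ?_
          intro n hn
          rw [hind n, if_neg]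
          simpa using hn
        rw [this, Finset.sum_congr rfl (fun n hn => by
          rw [hind n, if_pos (Finset.mem_range.mp hn)])]
        simp
      rw [hR]
      refine le_antisymm (sInf_le ⟨N, hspec, rfl⟩) (le_sInf ?_)
      rintro t ⟨n, hn, rfl⟩
      exact Nat.cast_le.mpr (Nat.find_le hn)
    · push_neg at hex
      have hS : {t : ℝ≥0∞ | ∃ n : ℕ, X n ω = h ∧ t = (n : ℝ≥0∞)} = ∅ := by
        ext t; simp only [Set.mem_setOf_eq, Set.mem_empty_iff_false, iff_false]
        rintro ⟨n, hn, -⟩; exact hex n hn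
      rw [hS, sInf_empty]
      have hall : ∀ n, (A n).indicator (fun _ => (1 : ℝ≥0∞)) ω = 1 := by
        intro n
        exact Set.indicator_of_mem (show ω ∈ A n from lt_of_le_of_ne (hbd n ω) (hex n)) _
      rw [tsum_congr hall]
      exact (ENNReal.tsum_const_eq_top_of_ne_zero one_ne_zero).symm
  -- integrability facts
  have intX : ∀ k, Integrable (fun ω => (X k ω : ℝ)) P := by
    intro k
    refine (integrable_const ((h : ℝ))).mono' ?_ ?_
    · exact (measurable_from_nat.comp (hXm k)).aestronglyMeasurable
    · filter_upwards with ω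
      rw [Real.norm_eq_abs, abs_of_nonneg (by positivity)]
      exact_mod_cast hbd k ω
  have intIndB : ∀ n, Integrable ((B n).indicator fun _ => (1 : ℝ)) P :=
    fun n => (integrable_const (1 : ℝ)).indicator (hBmeas n)
  have intIndA : ∀ n, Integrable ((A n).indicator fun _ => (1 : ℝ)) P :=
    fun n => (integrable_const (1 : ℝ)).indicator (hAmeas n)
  -- key one-step inequality
  have key : ∀ n, δ * (P (A n)).toReal ≤
      (∫ ω, (X (n + 1) ω : ℝ) ∂P) - ∫ ω, (X n ω : ℝ) ∂P := by
    intro n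
    have h1 : δ * (P (A n)).toReal
        = ∫ ω, δ * (A n).indicator (fun _ => (1 : ℝ)) ω ∂P := by
      rw [integral_const_mul, integral_indicator_const (1 : ℝ) (hAmeas n), smul_eq_mul, mul_one, measureReal_def]
    have h2 : (∫ ω, δ * (A n).indicator (fun _ => (1 : ℝ)) ω ∂P)
        ≤ ∫ ω, (P[(B n).indicator fun _ => (1 : ℝ) | ℱ n]) ω ∂P := by
      refine integral_mono_ae ((intIndA n).const_mul δ) integrable_condExp ?_
      exact hprog n
    have h3 : (∫ ω, (P[(B n).indicator fun _ => (1 : ℝ) | ℱ n]) ω ∂P)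
        = ∫ ω, (B n).indicator (fun _ => (1 : ℝ)) ω ∂P :=
      integral_condExp (ℱ.le n)
    have h4 : (∫ ω, (B n).indicator (fun _ => (1 : ℝ)) ω ∂P)
        ≤ ∫ ω, ((X (n + 1) ω : ℝ) - X n ω) ∂P := by
      refine integral_mono (intIndB n) ((intX (n + 1)).sub (intX n)) ?_
      intro ω
      dsimp only
      by_cases hc : ω ∈ B n
      · rw [Set.indicator_of_mem hc]
        have hc' : X n ω + 1 ≤ X (n + 1) ω := hc
        have := (Nat.cast_le (α := ℝ)).mpr hc'
        push_cast at this ⊢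
        linarith
      · rw [Set.indicator_of_notMem hc]
        have := (Nat.cast_le (α := ℝ)).mpr (hmono n ω)
        linarith
    rw [integral_sub (intX (n + 1)) (intX n)] at h4
    linarith [h1, h2, h3, h4]
  -- partial sums bound
  have hsum : ∀ N : ℕ, ∑ n ∈ Finset.range N, (P (A n)).toReal ≤ (h : ℝ) / δ := by
    intro N
    rw [le_div_iff₀ hδ0]
    have htel : ∑ n ∈ Finset.range N,
        ((∫ ω, (X (n + 1) ω : ℝ) ∂P) - ∫ ω, (X n ω : ℝ) ∂P)
        = (∫ ω, (X N ω : ℝ) ∂P) - ∫ ω, (X 0 ω : ℝ) ∂P :=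
      Finset.sum_range_sub (fun k => ∫ ω, (X k ω : ℝ) ∂P) N
    have h0 : (∫ ω, (X 0 ω : ℝ) ∂P) = 0 := by
      simp [hX0]
    have hN : (∫ ω, (X N ω : ℝ) ∂P) ≤ h := by
      calc (∫ ω, (X N ω : ℝ) ∂P) ≤ ∫ _, (h : ℝ) ∂P := by
            refine integral_mono (intX N) (integrable_const _) ?_
            intro ω; dsimp only; exact_mod_cast hbd N ω
        _ = h := by simp
    calc (∑ n ∈ Finset.range N, (P (A n)).toReal) * δ
        = ∑ n ∈ Finset.range N, δ * (P (A n)).toReal := by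
          rw [Finset.sum_mul]; exact Finset.sum_congr rfl (fun _ _ => mul_comm _ _)
      _ ≤ ∑ n ∈ Finset.range N,
            ((∫ ω, (X (n + 1) ω : ℝ) ∂P) - ∫ ω, (X n ω : ℝ) ∂P) :=
          Finset.sum_le_sum (fun n _ => key n)
      _ = (∫ ω, (X N ω : ℝ) ∂P) - ∫ ω, (X 0 ω : ℝ) ∂P := htel
      _ ≤ h := by rw [h0]; linarith
  -- conclude
  calc ∫⁻ ω, T ω ∂P
      = ∫⁻ ω, ∑' n, (A n).indicator (fun _ => (1 : ℝ≥0∞)) ω ∂P :=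
        lintegral_congr hTsum
    _ = ∑' n, ∫⁻ ω, (A n).indicator (fun _ => (1 : ℝ≥0∞)) ω ∂P :=
        lintegral_tsum (fun n =>
          ((measurable_const.indicator (hAmeas n)).aemeasurable))
    _ = ∑' n, P (A n) := by
        refine tsum_congr (fun n => ?_)
        exact lintegral_indicator_one (hAmeas n)
    _ ≤ ENNReal.ofReal ((h : ℝ) / δ) := by
        rw [ENNReal.tsum_eq_iSup_sum]
        refine iSup_le (fun s => ?_)
        have hsub : s ⊆ Finset.range (s.sup id + 1) := by
          intro n hn
          exact Finset.mem_range.mpr (Nat.lt_succ_of_le (Finset.le_sup (f := id) hn))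
        calc ∑ n ∈ s, P (A n)
            ≤ ∑ n ∈ Finset.range (s.sup id + 1), P (A n) :=
              Finset.sum_le_sum_of_subset hsub
          _ = ENNReal.ofReal (∑ n ∈ Finset.range (s.sup id + 1), (P (A n)).toReal) := by
              rw [ENNReal.ofReal_sum_of_nonneg (fun _ _ => ENNReal.toReal_nonneg)]
              exact Finset.sum_congr rfl (fun n _ =>
                (ENNReal.ofReal_toReal (measure_ne_top P _)).symm)
          _ ≤ ENNReal.ofReal ((h : ℝ) / δ) :=
              ENNReal.ofReal_le_ofReal (hsum _)
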